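/- Let f : ℝ² → [0, ∞) be K-Lipschitz with ∫_{ℝ²} f(x) dx = 1. Then sup_{x ∈ ℝ²} f(x) ≤ (3K²/π)^{1/3}. -/

import Mathlib

open MeasureTheory Real Set

lemma disc_vol (a b r : ℝ) :
    volume {x : ℝ × ℝ | Real.sqrt ((x.1 - a) ^ 2 + (x.2 - b) ^ 2) < r}
      = ENNReal.ofReal r ^ 2 * NNReal.pi := by
  have hmp := Complex.volume_preserving_equiv_real_prod
  have hS : MeasurableSet {x : ℝ × ℝ | Real.sqrt ((x.1 - a) ^ 2 + (x.2 - b) ^ 2) < r} := by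
    have : Continuous fun x : ℝ × ℝ => Real.sqrt ((x.1 - a) ^ 2 + (x.2 - b) ^ 2) := by fun_prop
    exact (isOpen_lt this continuous_const).measurableSet
  rw [← hmp.measure_preimage hS.nullMeasurableSet]
  have : Complex.measurableEquivRealProd ⁻¹' {x : ℝ × ℝ | Real.sqrt ((x.1 - a) ^ 2 + (x.2 - b) ^ 2) < r}
      = Metric.ball (⟨a, b⟩ : ℂ) r := by
    ext z
    simp [Complex.measurableEquivRealProd_apply, Metric.mem_ball, Complex.dist_eq_re_im]
  rw [this, Complex.volume_ball]

/-- If `f : ℝ² → [0, ∞)` is `K`-Lipschitz (for the Euclidean norm) with `∫ f = 1`, then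
`sup f ≤ (3K²/π)^{1/3}`. -/
theorem lipschitz_density_sup_bound
    (f : ℝ × ℝ → ℝ) (K : ℝ)
    (hfnonneg : ∀ x, 0 ≤ f x)
    (hlip : ∀ x y : ℝ × ℝ,
      |f x - f y| ≤ K * Real.sqrt ((x.1 - y.1) ^ 2 + (x.2 - y.2) ^ 2))
    (hint : ∫ x : ℝ × ℝ, f x = 1) :
    ∀ x : ℝ × ℝ, f x ≤ (3 * K ^ 2 / π) ^ ((1:ℝ) / 3) := by
  intro x₀
  have hrhs : (0:ℝ) ≤ (3 * K ^ 2 / π) ^ ((1:ℝ) / 3) :=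
    Real.rpow_nonneg (by positivity) _
  set M := f x₀ with hMdef
  by_cases hM : M ≤ 0
  · linarith
  push_neg at hM
  -- volume of the whole plane is infinite
  have hvuniv : (volume : Measure (ℝ × ℝ)) Set.univ = ⊤ := by
    rw [← univ_prod_univ, Measure.volume_eq_prod, Measure.prod_prod, Real.volume_univ,
      ENNReal.top_mul_top]
  -- K must be positive
  have hK : 0 < K := by
    rcases lt_trichotomy K 0 with hK | hK | hK
    · exfalso
      have h := hlip x₀ (x₀.1 + 1, x₀.2)
      have h1 : Real.sqrt ((x₀.1 - (x₀.1 + 1)) ^ 2 + (x₀.2 - x₀.2) ^ 2) = 1 := by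
        norm_num
      rw [h1] at h
      nlinarith [abs_nonneg (f x₀ - f (x₀.1 + 1, x₀.2))]
    · exfalso
      have hconst : ∀ x, f x = M := by
        intro x
        have h := hlip x x₀
        rw [hK, zero_mul] at h
        have h2 : f x - f x₀ = 0 := abs_nonpos_iff.mp h
        linarith
      rw [show (fun x : ℝ × ℝ => f x) = fun _ => M from funext hconst] at hint
      rw [integral_const, measureReal_def, hvuniv] at hint
      simp at hint
    · exact hK
  set a := x₀.1
  set b := x₀.2
  set d : ℝ × ℝ → ℝ := fun x => Real.sqrt ((x.1 - a) ^ 2 + (x.2 - b) ^ 2) with hd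
  set g : ℝ × ℝ → ℝ := fun x => max (M - K * d x) 0 with hg
  have hd0 : ∀ x, 0 ≤ d x := fun x => Real.sqrt_nonneg _
  have hfg : ∀ x, g x ≤ f x := by
    intro x
    apply max_le _ (hfnonneg x)
    have h := hlip x₀ x
    have h2 : f x₀ - f x ≤ |f x₀ - f x| := le_abs_self _
    have hsq : Real.sqrt ((x₀.1 - x.1) ^ 2 + (x₀.2 - x.2) ^ 2) = d x := by
      rw [hd]; congr 1; ring
    have h4 := le_trans h2 h
    rw [hsq] at h4
    linarith
  have hgc : Continuous g := by
    apply Continuous.max _ continuous_const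
    fun_prop
  have hdge : ∀ x : ℝ × ℝ, dist x x₀ ≤ d x := by
    intro x
    rw [Prod.dist_eq]
    apply max_le
    · rw [Real.dist_eq]
      rw [hd]
      have : |x.1 - a| = Real.sqrt ((x.1 - a) ^ 2) := (Real.sqrt_sq_eq_abs _).symm
      rw [this]
      exact Real.sqrt_le_sqrt (by nlinarith [sq_nonneg (x.2 - b)])
    · rw [Real.dist_eq]
      rw [hd]
      have : |x.2 - b| = Real.sqrt ((x.2 - b) ^ 2) := (Real.sqrt_sq_eq_abs _).symm
      rw [this]
      exact Real.sqrt_le_sqrt (by nlinarith [sq_nonneg (x.1 - a)])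
  have hgsupp : HasCompactSupport g := by
    apply HasCompactSupport.intro (isCompact_closedBall x₀ (M / K))
    intro x hx
    have hxd : M / K < dist x x₀ := by
      simpa [Metric.mem_closedBall, not_le] using hx
    have : M - K * d x ≤ 0 := by
      have h1 : M / K < d x := lt_of_lt_of_le hxd (hdge x)
      have h2 : M < K * d x := by
        rw [div_lt_iff₀ hK] at h1
        linarith [h1]
      linarith
    simp [hg, max_eq_right this]
  have hgint : Integrable g := hgc.integrable_of_hasCompactSupport hgsupp
  have hfint : Integrable f := by
    by_contra h
    rw [integral_undef h] at hint
    norm_num at hint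
  -- layer cake for g
  have hlayer := hgint.integral_eq_integral_meas_lt
    (Filter.Eventually.of_forall fun x => le_max_right _ _)
  have hmeas : ∀ t ∈ Ioi (0:ℝ),
      (volume {x : ℝ × ℝ | t < g x}).toReal
        = (Ioc (0:ℝ) M).indicator (fun t => π / K ^ 2 * (M - t) ^ 2) t := by
    intro t ht
    have ht0 : 0 < t := ht
    have hset : {x : ℝ × ℝ | t < g x} = {x : ℝ × ℝ | d x < (M - t) / K} := by
      ext x
      simp only [mem_setOf_eq, hg, lt_max_iff]
      constructor
      · rintro (h | h)
        · rw [lt_div_iff₀ hK]; linarith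
        · linarith
      · intro h
        left
        rw [lt_div_iff₀ hK] at h
        linarith
    rw [hset, hd]
    rw [show {x : ℝ × ℝ | Real.sqrt ((x.1 - a) ^ 2 + (x.2 - b) ^ 2) < (M - t) / K}
        = {x : ℝ × ℝ | Real.sqrt ((x.1 - a) ^ 2 + (x.2 - b) ^ 2) < (M - t) / K} from rfl]
    rw [disc_vol a b ((M - t) / K)]
    rw [ENNReal.toReal_mul, ENNReal.toReal_pow, ENNReal.toReal_ofReal']
    by_cases htM : t ≤ M
    · rw [indicator_of_mem (Set.mem_Ioc.mpr ⟨ht0, htM⟩)]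
      rw [max_eq_left (div_nonneg (by linarith) hK.le)]
      rw [ENNReal.coe_toReal, NNReal.coe_real_pi]
      rw [div_pow]
      ring
    · push_neg at htM
      rw [indicator_of_notMem (by simp [htM.not_ge])]
      rw [max_eq_right (by apply div_nonpos_of_nonpos_of_nonneg <;> linarith)]
      ring
  have hgval : ∫ x, g x = π / K ^ 2 * (M ^ 3 / 3) := by
    rw [hlayer]
    simp_rw [measureReal_def]
    rw [setIntegral_congr_fun measurableSet_Ioi hmeas]
    rw [setIntegral_indicator measurableSet_Ioc]
    rw [Set.inter_eq_self_of_subset_right (Ioc_subset_Ioi_self)]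
    rw [← intervalIntegral.integral_of_le hM.le]
    rw [intervalIntegral.integral_const_mul]
    have : ∀ t : ℝ, (M - t) ^ 2 = (fun u : ℝ => u ^ 2) (t - M) := by intro t; simp; ring
    simp_rw [this]
    rw [intervalIntegral.integral_comp_sub_right (fun u : ℝ => u ^ 2) M]
    rw [integral_pow]
    norm_num
    exact Or.inl (by ring)
  have hle : π / K ^ 2 * (M ^ 3 / 3) ≤ 1 := by
    rw [← hgval, ← hint]
    exact integral_mono hgint hfint hfg
  have hK2 : (0:ℝ) < K ^ 2 := by positivity
  have h3 : M ^ 3 ≤ 3 * K ^ 2 / π := by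
    have h6 := mul_le_mul_of_nonneg_left hle (by positivity : (0:ℝ) ≤ 3 * K ^ 2)
    have h7 : 3 * K ^ 2 * (π / K ^ 2 * (M ^ 3 / 3)) = π * M ^ 3 := by
      field_simp
    rw [le_div_iff₀ pi_pos]
    nlinarith [h6, h7]
  calc M = (M ^ 3) ^ ((1:ℝ) / 3) := by
        rw [← Real.rpow_natCast M 3, ← Real.rpow_mul hM.le]
        norm_num
    _ ≤ (3 * K ^ 2 / π) ^ ((1:ℝ) / 3) :=
        Real.rpow_le_rpow (by positivity) h3 (by norm_num)
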